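/- Let n ≥ 4. Assume that every measurable function on SU(2)^{n−1} invariant under the action of all automorphisms of the free group F_{n−1} is almost everywhere constant. Let f : SU(2)ⁿ → ℝ be measurable, invariant under simultaneous conjugation by SU(2), and invariant under the transformations (g₁,…,g_{n−1},gₙ) ↦ (σ_φ(g₁,…,g_{n−1}), gₙ) for every automorphism φ of F_{n−1}, where σ_φ denotes the action of φ on SU(2)^{n−1}. Then there exists a measurable function H : ℝ → ℝ such that f(g₁,…,gₙ) = H(tr(gₙ)) for almost every (g₁,…,gₙ) ∈ SU(2)ⁿ with respect to product Haar measure. -/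

import Mathlib

open MeasureTheory Matrix

noncomputable section

/-- The special unitary group `SU(2)` of 2×2 complex matrices. -/
abbrev SU2 := Matrix.specialUnitaryGroup (Fin 2) ℂ

instance : Group SU2 :=
  { (inferInstance : Monoid SU2) with
    inv := fun A => ⟨star A.1, by
      rcases Matrix.mem_specialUnitaryGroup_iff.mp A.2 with ⟨h1, h2⟩
      refine Matrix.mem_specialUnitaryGroup_iff.mpr ⟨Unitary.star_mem h1, ?_⟩
      rw [Matrix.star_eq_conjTranspose, Matrix.det_conjTranspose, h2, star_one]⟩
    inv_mul_cancel := fun A => Subtype.ext (Matrix.mem_specialUnitaryGroup_iff.mp A.2).1.1 }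

instance : MeasurableSpace SU2 := borel SU2
instance : BorelSpace SU2 := ⟨rfl⟩

/-- The action of an automorphism `φ` of the free group `F_n` on
`SU(2)^n ≅ Hom(F_n, SU(2))`, sending `g` to `(ρ_g(φ⁻¹ X_1), …, ρ_g(φ⁻¹ X_n))`,
where `ρ_g` is the homomorphism with `ρ_g(X_i) = g_i`. -/
def FreeGroup.act {n : ℕ} (φ : MulAut (FreeGroup (Fin n))) (g : Fin n → SU2) :
    Fin n → SU2 :=
  fun i => FreeGroup.lift g (φ⁻¹ (FreeGroup.of i))

open scoped ComplexConjugate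

namespace SU2Aux

lemma coe_inv (A : SU2) : ((A⁻¹ : SU2) : Matrix (Fin 2) (Fin 2) ℂ) = star (A : Matrix (Fin 2) (Fin 2) ℂ) := rfl

lemma star_mul_self (A : SU2) : star (A : Matrix (Fin 2) (Fin 2) ℂ) * A.1 = 1 :=
  (Matrix.mem_specialUnitaryGroup_iff.mp A.2).1.1

lemma mul_star_self (A : SU2) : (A : Matrix (Fin 2) (Fin 2) ℂ) * star A.1 = 1 :=
  (Matrix.mem_specialUnitaryGroup_iff.mp A.2).1.2

lemma det_coe (A : SU2) : (A : Matrix (Fin 2) (Fin 2) ℂ).det = 1 :=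
  (Matrix.mem_specialUnitaryGroup_iff.mp A.2).2

lemma star_eq_adjugate (A : SU2) : star (A : Matrix (Fin 2) (Fin 2) ℂ) = adjugate A.1 := by
  have h1 : A.1 * adjugate A.1 = 1 := by rw [Matrix.mul_adjugate, det_coe, one_smul]
  calc star A.1 = star A.1 * (A.1 * adjugate A.1) := by rw [h1, mul_one]
    _ = star A.1 * A.1 * adjugate A.1 := by rw [mul_assoc]
    _ = adjugate A.1 := by rw [star_mul_self, one_mul]

lemma apply11 (A : SU2) : (A : Matrix (Fin 2) (Fin 2) ℂ) 1 1 = conj (A.1 0 0) := by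
  have h : star (A : Matrix (Fin 2) (Fin 2) ℂ) 0 0 = adjugate A.1 0 0 := by
    rw [star_eq_adjugate]
  simp only [Matrix.star_eq_conjTranspose, Matrix.conjTranspose_apply,
    Matrix.adjugate_fin_two] at h
  simpa using h.symm

lemma apply10 (A : SU2) : (A : Matrix (Fin 2) (Fin 2) ℂ) 1 0 = - conj (A.1 0 1) := by
  have h : star (A : Matrix (Fin 2) (Fin 2) ℂ) 1 0 = adjugate A.1 1 0 := by
    rw [star_eq_adjugate]
  simp only [Matrix.star_eq_conjTranspose, Matrix.conjTranspose_apply,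
    Matrix.adjugate_fin_two] at h
  simp at h
  rw [h, neg_neg]

lemma trace_re (A : SU2) : (Matrix.trace (A : Matrix (Fin 2) (Fin 2) ℂ)).re = 2 * (A.1 0 0).re := by
  rw [Matrix.trace_fin_two, apply11]
  simp [Complex.add_re, Complex.conj_re]
  ring

lemma normSq_col (A : SU2) :
    Complex.normSq (A.1 0 0) + Complex.normSq (A.1 1 0) = 1 := by
  have h : (star (A : Matrix (Fin 2) (Fin 2) ℂ) * A.1) 0 0 = (1 : Matrix (Fin 2) (Fin 2) ℂ) 0 0 := by
    rw [star_mul_self]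
  simp only [Matrix.mul_apply, Fin.sum_univ_two, Matrix.star_eq_conjTranspose,
    Matrix.conjTranspose_apply, Matrix.one_apply_eq, Complex.star_def] at h
  have h0 : (starRingEnd ℂ) (A.1 0 0) * A.1 0 0 = (Complex.normSq (A.1 0 0) : ℂ) := by
    rw [Complex.normSq_eq_conj_mul_self]
  have h1 : (starRingEnd ℂ) (A.1 1 0) * A.1 1 0 = (Complex.normSq (A.1 1 0) : ℂ) := by
    rw [Complex.normSq_eq_conj_mul_self]
  rw [h0, h1] at h
  exact_mod_cast h

lemma re_mem (A : SU2) : -1 ≤ (A.1 0 0).re ∧ (A.1 0 0).re ≤ 1 := by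
  have h := normSq_col A
  have h2 : Complex.normSq (A.1 0 0) ≤ 1 := by
    nlinarith [Complex.normSq_nonneg (A.1 1 0)]
  rw [Complex.normSq_apply] at h2
  constructor <;> nlinarith [sq_nonneg ((A.1 0 0).im)]

lemma isClosed_su2 : IsClosed {M : Matrix (Fin 2) (Fin 2) ℂ | M ∈ Matrix.specialUnitaryGroup (Fin 2) ℂ} := by
  have h1 : IsClosed {M : Matrix (Fin 2) (Fin 2) ℂ | star M * M = 1} :=
    isClosed_eq (continuous_id.matrix_conjTranspose.matrix_mul continuous_id) continuous_const
  have h2 : IsClosed {M : Matrix (Fin 2) (Fin 2) ℂ | M.det = 1} :=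
    isClosed_eq continuous_id.matrix_det continuous_const
  have : {M : Matrix (Fin 2) (Fin 2) ℂ | M ∈ Matrix.specialUnitaryGroup (Fin 2) ℂ} =
      {M : Matrix (Fin 2) (Fin 2) ℂ | star M * M = 1} ∩ {M | M.det = 1} := by
    ext M
    simp only [Set.mem_setOf_eq, Set.mem_inter_iff, Matrix.mem_specialUnitaryGroup_iff,
      Matrix.mem_unitaryGroup_iff']
  rw [this]
  exact h1.inter h2

lemma isCompact_su2 : IsCompact {M : Matrix (Fin 2) (Fin 2) ℂ | M ∈ Matrix.specialUnitaryGroup (Fin 2) ℂ} := by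
  have hK : IsCompact (X := Matrix (Fin 2) (Fin 2) ℂ)
      (Set.univ.pi fun _ : Fin 2 => Set.univ.pi fun _ : Fin 2 => Metric.closedBall (0 : ℂ) 1) :=
    isCompact_univ_pi fun _ => isCompact_univ_pi fun _ => isCompact_closedBall 0 1
  refine hK.of_isClosed_subset isClosed_su2 ?_
  intro M hM
  have key : ∀ i j : Fin 2, M i j ∈ Metric.closedBall (0 : ℂ) 1 := by
    intro i j
    have h : (star M * M) j j = (1 : Matrix (Fin 2) (Fin 2) ℂ) j j := by
      rw [(Matrix.mem_specialUnitaryGroup_iff.mp hM).1.1]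
    simp only [Matrix.mul_apply, Fin.sum_univ_two, Matrix.star_eq_conjTranspose,
      Matrix.conjTranspose_apply, Matrix.one_apply_eq, Complex.star_def] at h
    have h0 : ((Complex.normSq (M 0 j) : ℂ)) + (Complex.normSq (M 1 j) : ℂ) = 1 := by
      rw [Complex.normSq_eq_conj_mul_self, Complex.normSq_eq_conj_mul_self]; exact h
    have h1 : Complex.normSq (M 0 j) + Complex.normSq (M 1 j) = 1 := by exact_mod_cast h0
    have h2 : Complex.normSq (M i j) ≤ 1 := by
      fin_cases i
      · show Complex.normSq (M 0 j) ≤ 1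
        nlinarith [Complex.normSq_nonneg (M 1 j)]
      · show Complex.normSq (M 1 j) ≤ 1
        nlinarith [Complex.normSq_nonneg (M 0 j)]
    simp only [Metric.mem_closedBall, dist_zero_right, Complex.norm_def]
    calc Real.sqrt (Complex.normSq (M i j)) ≤ Real.sqrt 1 := Real.sqrt_le_sqrt h2
      _ = 1 := Real.sqrt_one
  exact fun i _ j _ => key i j

instance : CompactSpace SU2 := isCompact_iff_compactSpace.mp isCompact_su2

instance : IsTopologicalGroup SU2 where
  continuous_mul := continuous_mul
  continuous_inv := by
    apply Continuous.subtype_mk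
    exact continuous_subtype_val.matrix_conjTranspose

/-- The canonical unit eigenvalue with given (half-)trace. -/
def lam (t : ℝ) : ℂ := Complex.exp ((Real.arccos (t/2) : ℂ) * Complex.I)

lemma conj_mul_lam (t : ℝ) : conj (lam t) * lam t = 1 := by
  rw [lam, ← Complex.exp_conj]
  simp only [_root_.map_mul, Complex.conj_ofReal, Complex.conj_I, mul_neg]
  rw [← Complex.exp_add]
  simp

lemma lam_mul_conj (t : ℝ) : lam t * conj (lam t) = 1 := by
  rw [mul_comm]; exact conj_mul_lam t

lemma lam_add_conj (t : ℝ) (h1 : -2 ≤ t) (h2 : t ≤ 2) : lam t + conj (lam t) = (t : ℂ) := by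
  have he : lam t = (Real.cos (Real.arccos (t/2)) : ℂ) + (Real.sin (Real.arccos (t/2)) : ℂ) * Complex.I := by
    rw [lam, Complex.exp_mul_I, Complex.ofReal_cos, Complex.ofReal_sin]
  rw [he]
  simp only [map_add, _root_.map_mul, Complex.conj_ofReal, Complex.conj_I, mul_neg]
  rw [Real.cos_arccos (by linarith) (by linarith)]
  push_cast
  ring

/-- The diagonal matrix `diag(λ(t), conj λ(t))`, as an element of `SU(2)`. -/
def D (t : ℝ) : SU2 :=
  ⟨Matrix.diagonal ![lam t, conj (lam t)], by
    rw [Matrix.mem_specialUnitaryGroup_iff]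
    constructor
    · rw [Matrix.mem_unitaryGroup_iff']
      rw [Matrix.star_eq_conjTranspose, Matrix.diagonal_conjTranspose,
        Matrix.diagonal_mul_diagonal]
      have hv : (fun i : Fin 2 => star ![lam t, conj (lam t)] i * ![lam t, conj (lam t)] i) = (1 : Fin 2 → ℂ) := by
        funext i
        fin_cases i
        · show star (lam t) * lam t = 1
          exact conj_mul_lam t
        · show star (conj (lam t)) * conj (lam t) = 1
          simpa using lam_mul_conj t
      rw [hv]
      exact Matrix.diagonal_one
    · rw [Matrix.det_diagonal]
      simpa [Fin.prod_univ_two] using lam_mul_conj t⟩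

lemma continuous_lam : Continuous lam :=
  Complex.continuous_exp.comp
    ((Complex.continuous_ofReal.comp (Real.continuous_arccos.comp
      (continuous_id.div_const 2))).mul continuous_const)

lemma continuous_D : Continuous D := by
  apply Continuous.subtype_mk
  apply Continuous.matrix_diagonal
  apply continuous_pi
  intro i
  fin_cases i
  · simpa using continuous_lam
  · have hcl : Continuous fun a => conj (lam a) := Complex.continuous_conj.comp continuous_lam
    simpa using hcl

lemma exists_conj (A : SU2) :
    ∃ U : SU2, A = U * D ((Matrix.trace (A : Matrix (Fin 2) (Fin 2) ℂ)).re) * U⁻¹ := by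
  set t : ℝ := (Matrix.trace (A : Matrix (Fin 2) (Fin 2) ℂ)).re with ht
  set l : ℂ := lam t with hl
  have hre := re_mem A
  have htr : t = 2 * (A.1 0 0).re := by rw [ht, trace_re]
  have hsum : l + conj l = (t : ℂ) :=
    lam_add_conj t (by rw [htr]; linarith [hre.1]) (by rw [htr]; linarith [hre.2])
  have hml : conj l * l = 1 := conj_mul_lam t
  have htrace : A.1 0 0 + A.1 1 1 = (t : ℂ) := by
    rw [apply11, Complex.add_conj, htr]
  have hroot : l * l - (t : ℂ) * l + 1 = 0 := by
    rw [← hsum, ← hml]; ring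
  have hdet0 : (A.1 - l • (1 : Matrix (Fin 2) (Fin 2) ℂ)).det = 0 := by
    have hd : (A.1 - l • (1 : Matrix (Fin 2) (Fin 2) ℂ)).det =
        (A.1 0 0 - l) * (A.1 1 1 - l) - A.1 0 1 * A.1 1 0 := by
      rw [Matrix.det_fin_two]
      simp [Matrix.sub_apply, Matrix.smul_apply, Matrix.one_apply]
    have hdetA := det_coe A
    rw [Matrix.det_fin_two] at hdetA
    rw [hd]
    linear_combination hdetA + hroot - l * htrace
  obtain ⟨v, hv0, hv⟩ := Matrix.exists_mulVec_eq_zero_iff.mpr hdet0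
  have hAv : A.1 *ᵥ v = l • v := by
    rw [Matrix.sub_mulVec, Matrix.smul_mulVec, Matrix.one_mulVec] at hv
    exact sub_eq_zero.mp hv
  have hAvi : ∀ i : Fin 2, A.1 i 0 * v 0 + A.1 i 1 * v 1 = l * v i := by
    intro i
    have h := congrFun hAv i
    simpa [Matrix.mulVec, dotProduct, Fin.sum_univ_two, Pi.smul_apply,
      smul_eq_mul] using h
  obtain ⟨w, hnormw, hwv⟩ : ∃ w : Fin 2 → ℂ,
      (conj (w 0) * w 0 + conj (w 1) * w 1 = 1) ∧
      (∀ i : Fin 2, A.1 i 0 * w 0 + A.1 i 1 * w 1 = l * w i) := by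
    have hvpos : 0 < Complex.normSq (v 0) + Complex.normSq (v 1) := by
      rcases Function.ne_iff.mp hv0 with ⟨i, hi⟩
      fin_cases i
      · have h0 := Complex.normSq_pos.mpr (show v 0 ≠ 0 from hi)
        nlinarith [Complex.normSq_nonneg (v 1)]
      · have h1 := Complex.normSq_pos.mpr (show v 1 ≠ 0 from hi)
        nlinarith [Complex.normSq_nonneg (v 0)]
    set n : ℝ := Real.sqrt (Complex.normSq (v 0) + Complex.normSq (v 1)) with hn
    have hnpos : 0 < n := Real.sqrt_pos.mpr hvpos
    have hsq : n ^ 2 = Complex.normSq (v 0) + Complex.normSq (v 1) := Real.sq_sqrt hvpos.le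
    refine ⟨fun i => ((n⁻¹ : ℝ) : ℂ) * v i, ?_, ?_⟩
    · have key : ∀ i : Fin 2, conj (((n⁻¹ : ℝ) : ℂ) * v i) * (((n⁻¹ : ℝ) : ℂ) * v i)
          = ((Complex.normSq (v i) / n ^ 2 : ℝ) : ℂ) := by
        intro i
        rw [← Complex.normSq_eq_conj_mul_self, Complex.normSq_mul, Complex.normSq_ofReal]
        rw [Complex.ofReal_div]
        push_cast
        rw [div_eq_mul_inv, sq]
        ring
      show conj (((n⁻¹ : ℝ) : ℂ) * v 0) * (((n⁻¹ : ℝ) : ℂ) * v 0)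
          + conj (((n⁻¹ : ℝ) : ℂ) * v 1) * (((n⁻¹ : ℝ) : ℂ) * v 1) = 1
      rw [key 0, key 1, ← Complex.ofReal_add, ← add_div, hsq,
        div_self (ne_of_gt hvpos), Complex.ofReal_one]
    · intro i
      show A.1 i 0 * (((n⁻¹ : ℝ) : ℂ) * v 0) + A.1 i 1 * (((n⁻¹ : ℝ) : ℂ) * v 1)
          = l * (((n⁻¹ : ℝ) : ℂ) * v i)
      linear_combination ((n⁻¹ : ℝ) : ℂ) * hAvi i
  have e0 := hwv 0
  have e1 := hwv 1
  have hUmem : !![w 0, -conj (w 1); w 1, conj (w 0)] ∈ Matrix.specialUnitaryGroup (Fin 2) ℂ := by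
    rw [Matrix.mem_specialUnitaryGroup_iff]
    constructor
    · rw [Matrix.mem_unitaryGroup_iff']
      refine Matrix.ext fun i j => ?_
      rw [Matrix.one_fin_two]
      fin_cases i <;> fin_cases j <;>
        · simp only [Matrix.mul_apply, Fin.sum_univ_two, Matrix.star_eq_conjTranspose,
            Matrix.conjTranspose_apply, Matrix.cons_val', Matrix.cons_val_zero,
            Matrix.cons_val_one, Matrix.head_cons, Matrix.head_fin_const, Matrix.empty_val',
            Matrix.cons_val_fin_one, Matrix.of_apply, map_neg, Complex.conj_conj,
            Complex.star_def, Fin.zero_eta, Fin.mk_one]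
          first
            | linear_combination hnormw
            | ring
    · rw [Matrix.det_fin_two_of]
      linear_combination hnormw
  set Usu : SU2 := (⟨!![w 0, -conj (w 1); w 1, conj (w 0)], hUmem⟩ : SU2) with hUsu
  set C : SU2 := Usu⁻¹ * A * Usu with hC
  have hC1 : (C : Matrix (Fin 2) (Fin 2) ℂ) =
      star !![w 0, -conj (w 1); w 1, conj (w 0)]
        * ((A : Matrix (Fin 2) (Fin 2) ℂ) * !![w 0, -conj (w 1); w 1, conj (w 0)]) := by
    rw [hC]
    show star !![w 0, -conj (w 1); w 1, conj (w 0)] * (A : Matrix (Fin 2) (Fin 2) ℂ)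
        * !![w 0, -conj (w 1); w 1, conj (w 0)] = _
    rw [mul_assoc]
  have hC00 : (C : Matrix (Fin 2) (Fin 2) ℂ) 0 0 = l := by
    rw [hC1]
    simp only [Matrix.mul_apply, Fin.sum_univ_two, Matrix.star_eq_conjTranspose,
      Matrix.conjTranspose_apply, Matrix.cons_val', Matrix.cons_val_zero, Matrix.cons_val_one,
      Matrix.head_cons, Matrix.head_fin_const, Matrix.empty_val', Matrix.cons_val_fin_one,
      Matrix.of_apply, map_neg, Complex.conj_conj, Complex.star_def]
    linear_combination conj (w 0) * e0 + conj (w 1) * e1 + l * hnormw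
  have hC10 : (C : Matrix (Fin 2) (Fin 2) ℂ) 1 0 = 0 := by
    rw [hC1]
    simp only [Matrix.mul_apply, Fin.sum_univ_two, Matrix.star_eq_conjTranspose,
      Matrix.conjTranspose_apply, Matrix.cons_val', Matrix.cons_val_zero, Matrix.cons_val_one,
      Matrix.head_cons, Matrix.head_fin_const, Matrix.empty_val', Matrix.cons_val_fin_one,
      Matrix.of_apply, map_neg, Complex.conj_conj, Complex.star_def]
    linear_combination (-(w 1)) * e0 + w 0 * e1
  have hC11 : (C : Matrix (Fin 2) (Fin 2) ℂ) 1 1 = conj l := by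
    rw [apply11 C, hC00]
  have hC01 : (C : Matrix (Fin 2) (Fin 2) ℂ) 0 1 = 0 := by
    have h := apply10 C
    rw [hC10] at h
    have h2 : conj ((C : Matrix (Fin 2) (Fin 2) ℂ) 0 1) = 0 := neg_eq_zero.mp h.symm
    simpa using congrArg conj h2
  have hdiag : Matrix.diagonal ![l, conj l] = !![l, 0; 0, conj l] := by
    refine Matrix.ext fun i j => ?_
    fin_cases i <;> fin_cases j <;> simp [Matrix.diagonal_apply]
  have hCD : C = D t := by
    apply Subtype.ext
    show (C : Matrix (Fin 2) (Fin 2) ℂ) = Matrix.diagonal ![l, conj l]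
    rw [Matrix.eta_fin_two (C : Matrix (Fin 2) (Fin 2) ℂ), hC00, hC01, hC10, hC11, hdiag]
  refine ⟨Usu, ?_⟩
  rw [← hCD, hC]
  group

lemma map_conj_eq (μ : Measure SU2) [μ.IsHaarMeasure] [IsProbabilityMeasure μ] (h : SU2) :
    μ.map (fun x => h * x * h⁻¹) = μ := by
  have hfun : ⇑(MulAut.conj h) = fun x : SU2 => h * x * h⁻¹ := by
    funext x; exact MulAut.conj_apply h x
  have hfun2 : ⇑(MulAut.conj h).symm = fun x : SU2 => h⁻¹ * x * h := by
    funext x; exact MulAut.conj_symm_apply h x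
  have hc : Continuous fun x : SU2 => h * x * h⁻¹ :=
    (continuous_const.mul continuous_id).mul continuous_const
  have hcs : Continuous fun x : SU2 => h⁻¹ * x * h :=
    (continuous_const.mul continuous_id).mul continuous_const
  haveI h1 : (μ.map ⇑(MulAut.conj h)).IsHaarMeasure :=
    MulEquiv.isHaarMeasure_map μ (MulAut.conj h) (by rw [hfun]; exact hc)
      (by rw [hfun2]; exact hcs)
  haveI h2 : IsProbabilityMeasure (μ.map ⇑(MulAut.conj h)) :=
    Measure.isProbabilityMeasure_map (by rw [hfun]; exact hc.measurable.aemeasurable)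
  have := Measure.isHaarMeasure_eq_of_isProbabilityMeasure (μ.map ⇑(MulAut.conj h)) μ
  rw [hfun] at this
  exact this

lemma measurePreserving_conj (μ : Measure SU2) [μ.IsHaarMeasure] [IsProbabilityMeasure μ]
    (h : SU2) : MeasurePreserving (fun x : SU2 => h * x * h⁻¹) μ μ :=
  ⟨((continuous_const.mul continuous_id).mul continuous_const).measurable, map_conj_eq μ h⟩


end SU2Aux

/-- Inductive step (the paper's Lemma 3.2 for `j = n`, with `n = m + 1 ≥ 4`): if every
measurable `Aut(F_m)`-invariant function on `SU(2)^m` is a.e. constant, then every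
measurable function on `SU(2)^(m+1)` invariant under simultaneous conjugation and under
the stabilized copy of `Aut(F_m)` factors a.e. through the trace of the last
coordinate. -/
theorem invariant_function_factors_through_last_trace (m : ℕ) (hm : 3 ≤ m)
    (μ : Measure SU2) [μ.IsHaarMeasure] [IsProbabilityMeasure μ]
    (hind : ∀ F : (Fin m → SU2) → ℝ, Measurable F →
      (∀ (φ : MulAut (FreeGroup (Fin m))) (g : Fin m → SU2), F (FreeGroup.act φ g) = F g) →
      ∃ c : ℝ, ∀ᵐ g ∂(Measure.pi fun _ : Fin m => μ), F g = c)
    (f : (Fin (m+1) → SU2) → ℝ) (hf : Measurable f)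
    (hconj : ∀ (h : SU2) (g : Fin (m+1) → SU2), f (fun i => h * g i * h⁻¹) = f g)
    (hinv : ∀ (φ : MulAut (FreeGroup (Fin m))) (g : Fin (m+1) → SU2),
      f (Fin.snoc (FreeGroup.act φ (Fin.init g)) (g (Fin.last m))) = f g) :
    ∃ H : ℝ → ℝ, Measurable H ∧
      ∀ᵐ g ∂(Measure.pi fun _ : Fin (m+1) => μ),
        f g = H ((Matrix.trace ((g (Fin.last m) : SU2) : Matrix (Fin 2) (Fin 2) ℂ)).re) := by
  classical
  set ν : Measure (Fin m → SU2) := Measure.pi (fun _ : Fin m => μ) with hν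
  haveI : IsProbabilityMeasure ν := by rw [hν]; infer_instance
  have hsnoc : Measurable fun p : SU2 × (Fin m → SU2) => (Fin.snoc p.2 p.1 : Fin (m+1) → SU2) := by
    refine measurable_pi_iff.2 fun i => ?_
    refine Fin.lastCases ?_ (fun j => ?_) i
    · simpa [Fin.snoc_last] using measurable_fst
    · have hmj : Measurable fun x : SU2 × (Fin m → SU2) => x.2 j := (measurable_pi_apply j).comp measurable_snd
      simpa [Fin.snoc_castSucc] using hmj
  have hfp : Measurable fun p : SU2 × (Fin m → SU2) => f (Fin.snoc p.2 p.1) := hf.comp hsnoc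
  set c : SU2 → ℝ := fun x => ∫ g, f (Fin.snoc g x) ∂ν with hc
  have hc_meas : Measurable c :=
    (hfp.stronglyMeasurable.integral_prod_right' (ν := ν)).measurable
  have hslice : ∀ x : SU2, ∀ᵐ g ∂ν, f (Fin.snoc g x) = c x := by
    intro x
    have hFmeas : Measurable fun g : Fin m → SU2 => f (Fin.snoc g x) :=
      hfp.comp (measurable_prodMk_left)
    obtain ⟨k, hk⟩ := hind (fun g => f (Fin.snoc g x)) hFmeas (fun φ g => by
      have h2 := hinv φ (Fin.snoc g x)
      simpa [Fin.init_snoc, Fin.snoc_last] using h2)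
    have hcx : c x = k := by
      calc c x = ∫ _g, k ∂ν := integral_congr_ae hk
        _ = k := by simp
    filter_upwards [hk] with g hg
    rw [hg, hcx]
  have hprod : ∀ᵐ p ∂(μ.prod ν), f (Fin.snoc p.2 p.1) = c p.1 := by
    have hset : MeasurableSet {p : SU2 × (Fin m → SU2) | ¬ f (Fin.snoc p.2 p.1) = c p.1} :=
      (measurableSet_eq_fun hfp (hc_meas.comp measurable_fst)).compl
    rw [ae_iff, Measure.measure_prod_null hset]
    refine Filter.EventuallyEq.of_eq (funext fun x => ?_)
    have hx := hslice x
    rw [ae_iff] at hx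
    exact hx
  have hMP := measurePreserving_piFinSuccAbove (fun _ : Fin (m+1) => μ) (Fin.last m)
  have hae : ∀ᵐ g ∂(Measure.pi fun _ : Fin (m+1) => μ),
      f (Fin.snoc (fun j : Fin m => g ((Fin.last m).succAbove j)) (g (Fin.last m)))
        = c (g (Fin.last m)) :=
    hMP.quasiMeasurePreserving.ae hprod
  have hae2 : ∀ᵐ g ∂(Measure.pi fun _ : Fin (m+1) => μ), f g = c (g (Fin.last m)) := by
    filter_upwards [hae] with g hg
    have hini : (fun j : Fin m => g ((Fin.last m).succAbove j)) = Fin.init g := by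
      funext j
      rw [Fin.succAbove_last]
      rfl
    rw [hini, Fin.snoc_init_self] at hg
    exact hg
  have hconj_c : ∀ (h x : SU2), c (h * x * h⁻¹) = c x := by
    intro h x
    have hmpc : MeasurePreserving (fun y : SU2 => h⁻¹ * y * h) μ μ := by
      have h2 := SU2Aux.measurePreserving_conj μ h⁻¹
      simpa using h2
    have hmp : MeasurePreserving (fun gg : Fin m → SU2 => fun i => h⁻¹ * gg i * h) ν ν :=
      measurePreserving_pi _ _ (fun _ => hmpc)
    have hFm : Measurable fun y : Fin m → SU2 => f (Fin.snoc y x) :=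
      hfp.comp (measurable_prodMk_left)
    calc c (h * x * h⁻¹) = ∫ g, f (Fin.snoc g (h * x * h⁻¹)) ∂ν := rfl
      _ = ∫ g, f (Fin.snoc (fun i => h⁻¹ * g i * h) x) ∂ν := by
          refine integral_congr_ae (Filter.Eventually.of_forall fun g => ?_)
          show f (Fin.snoc g (h * x * h⁻¹)) = f (Fin.snoc (fun k => h⁻¹ * g k * h) x)
          have hrw : (Fin.snoc g (h * x * h⁻¹) : Fin (m+1) → SU2)
              = fun i => h * (Fin.snoc (fun k => h⁻¹ * g k * h) x : Fin (m+1) → SU2) i * h⁻¹ := by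
            funext i
            refine Fin.lastCases ?_ (fun j => ?_) i
            · simp
            · simp only [Fin.snoc_castSucc]
              group
          rw [hrw]
          exact hconj h _
      _ = ∫ g, f (Fin.snoc g x) ∂ν := by
          symm
          conv_lhs => rw [← hmp.map_eq]
          exact integral_map hmp.aemeasurable hFm.aestronglyMeasurable
      _ = c x := rfl
  refine ⟨fun s => c (SU2Aux.D s), hc_meas.comp SU2Aux.continuous_D.measurable, ?_⟩
  filter_upwards [hae2] with g hg
  rw [hg]
  obtain ⟨U, hU⟩ := SU2Aux.exists_conj (g (Fin.last m))
  conv_lhs => rw [hU]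
  exact hconj_c U (SU2Aux.D ((Matrix.trace ((g (Fin.last m) : SU2) : Matrix (Fin 2) (Fin 2) ℂ)).re))
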